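/- Let A be a finite-dimensional algebra over an algebraically closed field. If A admits an infinite Hom-orthogonal set of modules all of k-dimension d', then there exists a positive integer d ≤ d' such that A admits an infinite semibrick consisting of bricks all of k-dimension d. -/

import Mathlib

universe u v

open Module

/-- A finite-dimensional left module over the `k`-algebra `A`. -/
structure FDMod (k A : Type u) [Field k] [Ring A] [Algebra k A] : Type (u + 1) where
  carrier : Type u
  [addCommGroup : AddCommGroup carrier]
  [moduleK : Module k carrier]
  [moduleA : Module A carrier]
  [tower : IsScalarTower k A carrier]
  [fd : FiniteDimensional k carrier]

attribute [instance] FDMod.addCommGroup FDMod.moduleK FDMod.moduleA FDMod.tower FDMod.fd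

variable {k A : Type u} [Field k] [Ring A] [Algebra k A]

/-- `M` is a brick: `M ≠ 0` and every `A`-endomorphism of `M` is a `k`-scalar,
i.e. `End_A(M) ≅ k`. -/
def FDMod.IsBrick (M : FDMod k A) : Prop :=
  Nontrivial M.carrier ∧ ∀ f : M.carrier →ₗ[A] M.carrier, ∃ c : k, ∀ x : M.carrier, f x = c • x

/-- `M` and `N` are Hom-orthogonal: `Hom_A(M,N) = 0` and `Hom_A(N,M) = 0`. -/
def FDMod.HomOrth (M N : FDMod k A) : Prop :=
  (∀ f : M.carrier →ₗ[A] N.carrier, f = 0) ∧ (∀ f : N.carrier →ₗ[A] M.carrier, f = 0)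

/-- `M` and `N` are isomorphic as `A`-modules. -/
def FDMod.Iso (M N : FDMod k A) : Prop :=
  Nonempty (M.carrier ≃ₗ[A] N.carrier)

/-- A family of modules forms a Hom-orthogonal set: the modules are nonzero,
pairwise non-isomorphic and pairwise Hom-orthogonal. -/
def HomOrthFamily {I : Type v} (X : I → FDMod k A) : Prop :=
  (∀ i, Nontrivial (X i).carrier) ∧
  (∀ i j, i ≠ j → ¬(X i).Iso (X j)) ∧
  (∀ i j, i ≠ j → (X i).HomOrth (X j))

/-- `A` is brick-finite: there are only finitely many isomorphism classes of bricks. -/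
def BrickFinite (k A : Type u) [Field k] [Ring A] [Algebra k A] : Prop :=
  ∃ (m : ℕ) (f : Fin m → FDMod k A), ∀ N : FDMod k A, N.IsBrick → ∃ i, N.Iso (f i)

/-- `A` has rank `n`: there are exactly `n` isomorphism classes of simple modules. -/
def HasRank (k A : Type u) [Field k] [Ring A] [Algebra k A] (n : ℕ) : Prop :=
  ∃ S : Fin n → FDMod k A,
    (∀ i, IsSimpleModule A (S i).carrier) ∧
    (∀ i j, i ≠ j → ¬(S i).Iso (S j)) ∧
    (∀ T : FDMod k A, IsSimpleModule A T.carrier → ∃ i, T.Iso (S i))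

/- ----------------- auxiliary material ----------------- -/

instance fdmodSMulComm (M : FDMod k A) : SMulCommClass k A M.carrier :=
  ⟨fun c a x => by
    rw [← algebraMap_smul A c x, ← algebraMap_smul A c (a • x), smul_smul, smul_smul,
      Algebra.commutes]⟩

instance fdmodSMulComm' (M : FDMod k A) : SMulCommClass A k M.carrier :=
  SMulCommClass.symm _ _ _

lemma homOrthFamily_comp {I : Type*} {J : Type*} {X : I → FDMod k A}
    (h : HomOrthFamily X) {f : J → I} (hf : Function.Injective f) :
    HomOrthFamily (fun j => X (f j)) :=
  ⟨fun i => h.1 (f i), fun i j hij => h.2.1 _ _ (fun e => hij (hf e)),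
   fun i j hij => h.2.2 _ _ (fun e => hij (hf e))⟩

lemma FDMod.HomOrth.not_iso {M N : FDMod k A} (hM : Nontrivial M.carrier)
    (h : M.HomOrth N) : ¬ M.Iso N := by
  rintro ⟨e⟩
  obtain ⟨x, y, hxy⟩ := hM
  have h0 : (e : M.carrier →ₗ[A] N.carrier) = 0 := h.1 _
  apply hxy
  apply e.injective
  have hx := congrFun (congrArg (DFunLike.coe) h0) x
  have hy := congrFun (congrArg (DFunLike.coe) h0) y
  simp only [LinearEquiv.coe_coe, LinearMap.zero_apply] at hx hy
  rw [hx, hy]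

/-- The image of an endomorphism, as a finite-dimensional module. -/
noncomputable def FDMod.range (M : FDMod k A) (g : M.carrier →ₗ[A] M.carrier) : FDMod k A where
  carrier := LinearMap.range g
  fd := FiniteDimensional.of_injective ((LinearMap.range g).subtype.restrictScalars k)
    Subtype.val_injective

lemma range_nontrivial (M : FDMod k A) {g : M.carrier →ₗ[A] M.carrier} (hg : g ≠ 0) :
    Nontrivial (M.range g).carrier :=
  Submodule.nontrivial_iff_ne_bot.mpr (fun h => hg (LinearMap.range_eq_bot.mp h))

lemma homOrth_range {M N : FDMod k A} (h : M.HomOrth N)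
    (g₁ : M.carrier →ₗ[A] M.carrier) (g₂ : N.carrier →ₗ[A] N.carrier) :
    (M.range g₁).HomOrth (N.range g₂) := by
  constructor
  · intro φ
    have hz : (LinearMap.range g₂).subtype ∘ₗ (φ ∘ₗ g₁.rangeRestrict) = 0 := h.1 _
    apply LinearMap.ext
    rintro ⟨y, x, rfl⟩
    have hx := congrFun (congrArg (DFunLike.coe) hz) x
    exact Subtype.ext hx
  · intro φ
    have hz : (LinearMap.range g₁).subtype ∘ₗ (φ ∘ₗ g₂.rangeRestrict) = 0 := h.2 _
    apply LinearMap.ext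
    rintro ⟨y, x, rfl⟩
    have hx := congrFun (congrArg (DFunLike.coe) hz) x
    exact Subtype.ext hx

/-- `k`-linear equivalence between the `A`-range and the `k`-range. -/
noncomputable def rangeEquiv (M : FDMod k A) (g : M.carrier →ₗ[A] M.carrier) :
    (M.range g).carrier ≃ₗ[k] ↥(LinearMap.range (g.restrictScalars k)) where
  toFun x := ⟨x.1, by obtain ⟨y, hy⟩ := x.2; exact ⟨y, hy⟩⟩
  invFun x := ⟨x.1, by obtain ⟨y, hy⟩ := x.2; exact ⟨y, hy⟩⟩
  map_add' _ _ := rfl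
  map_smul' _ _ := rfl
  left_inv _ := rfl
  right_inv _ := rfl

lemma exists_range_small [IsAlgClosed k] (M : FDMod k A) (hnt : Nontrivial M.carrier)
    (hnb : ¬ M.IsBrick) :
    ∃ g : M.carrier →ₗ[A] M.carrier, g ≠ 0 ∧
      finrank k (M.range g).carrier < finrank k M.carrier := by
  have hf : ∃ f : M.carrier →ₗ[A] M.carrier, ∀ c : k, ∃ x, f x ≠ c • x := by
    by_contra hcon
    push_neg at hcon
    exact hnb ⟨hnt, hcon⟩
  obtain ⟨f, hf⟩ := hf
  obtain ⟨c, hc⟩ := Module.End.exists_eigenvalue (f.restrictScalars k : Module.End k M.carrier)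
  obtain ⟨v, hv⟩ := hc.exists_hasEigenvector
  have hveq : f v = c • v := hv.apply_eq_smul
  refine ⟨f - c • LinearMap.id, ?_, ?_⟩
  · intro h0
    obtain ⟨x, hx⟩ := hf c
    apply hx
    have := congrFun (congrArg (DFunLike.coe) h0) x
    simp only [LinearMap.sub_apply, LinearMap.smul_apply, LinearMap.id_apply,
      LinearMap.zero_apply] at this
    rwa [sub_eq_zero] at this
  · set g := f - c • (LinearMap.id : M.carrier →ₗ[A] M.carrier) with hgdef
    have hker : v ∈ LinearMap.ker (g.restrictScalars k) := by
      simp only [LinearMap.mem_ker, LinearMap.coe_restrictScalars, hgdef,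
        LinearMap.sub_apply, LinearMap.smul_apply, LinearMap.id_apply, sub_eq_zero]
      exact hveq
    have hkernt : Nontrivial ↥(LinearMap.ker (g.restrictScalars k)) :=
      Submodule.nontrivial_iff_ne_bot.mpr ((Submodule.ne_bot_iff _).mpr ⟨v, hker, hv.2⟩)
    have h1 : finrank k (M.range g).carrier
        = finrank k ↥(LinearMap.range (g.restrictScalars k)) :=
      (rangeEquiv M g).finrank_eq
    have h2 := (g.restrictScalars k).finrank_range_add_finrank_ker
    have h3 : 0 < finrank k ↥(LinearMap.ker (g.restrictScalars k)) := finrank_pos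
    omega

/-- If `A` admits an infinite Hom-orthogonal set of modules all of
`k`-dimension `d'`, then there is a positive integer `d ≤ d'` such that `A` admits
an infinite semibrick consisting of bricks all of `k`-dimension `d`. -/
theorem stmt5 {k A : Type u} [Field k] [IsAlgClosed k] [Ring A] [Algebra k A]
    [FiniteDimensional k A] (d' : ℕ) {I : Type v} [Infinite I]
    (X : I → FDMod k A) (hX : HomOrthFamily X)
    (hdim : ∀ i, finrank k (X i).carrier = d') :
    ∃ d : ℕ, 0 < d ∧ d ≤ d' ∧
      ∃ (J : Type u) (B : J → FDMod k A), Infinite J ∧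
        HomOrthFamily B ∧ (∀ j, (B j).IsBrick) ∧
        (∀ j, finrank k (B j).carrier = d) := by
  classical
  let emb := Infinite.natEmbedding I
  have hPd' : ∃ B : ℕ → FDMod k A, HomOrthFamily B ∧ ∀ n, finrank k (B n).carrier = d' :=
    ⟨fun n => X (emb n), homOrthFamily_comp hX emb.injective, fun n => hdim _⟩
  have hex : ∃ d, ∃ B : ℕ → FDMod k A, HomOrthFamily B ∧ ∀ n, finrank k (B n).carrier = d :=
    ⟨d', hPd'⟩
  obtain ⟨B, hB, hBdim⟩ := Nat.find_spec hex
  set d := Nat.find hex with hd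
  have hd_pos : 0 < d := by
    haveI := hB.1 0
    have h1 : 0 < finrank k (B 0).carrier := finrank_pos
    rwa [hBdim 0] at h1
  have hd_le : d ≤ d' := Nat.find_min' hex hPd'
  have hfin : ¬ Infinite {n : ℕ // ¬ (B n).IsBrick} := by
    intro hinf
    have hgs : ∀ n : {n : ℕ // ¬ (B n).IsBrick},
        ∃ g : (B n.1).carrier →ₗ[A] (B n.1).carrier, g ≠ 0 ∧
          finrank k ((B n.1).range g).carrier < finrank k (B n.1).carrier :=
      fun n => exists_range_small _ (hB.1 n.1) n.2
    choose g hg0 hglt using hgs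
    have hdimlt : ∀ n, finrank k ((B n.1).range (g n)).carrier < d := fun n => by
      have := hglt n; rwa [hBdim n.1] at this
    let dimf : {n : ℕ // ¬ (B n).IsBrick} → Fin d := fun n =>
      ⟨finrank k ((B n.1).range (g n)).carrier, hdimlt n⟩
    obtain ⟨e, he⟩ := Finite.exists_infinite_fiber dimf
    haveI := he
    let emb2 := Infinite.natEmbedding (dimf ⁻¹' {e})
    let ι : ℕ → {n : ℕ // ¬ (B n).IsBrick} := fun n => (emb2 n).1
    have hι : Function.Injective ι :=
      Subtype.val_injective.comp emb2.injective
    have hι' : Function.Injective (fun n => (ι n).1) :=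
      Subtype.val_injective.comp hι
    let C : ℕ → FDMod k A := fun n => (B (ι n).1).range (g (ι n))
    have hCorth : ∀ n m, n ≠ m → (C n).HomOrth (C m) := fun n m hnm =>
      homOrth_range (hB.2.2 _ _ (fun hh => hnm (hι' hh))) _ _
    have hCnt : ∀ n, Nontrivial (C n).carrier := fun n => range_nontrivial _ (hg0 (ι n))
    have hC : HomOrthFamily C :=
      ⟨hCnt, fun n m hnm => (hCorth n m hnm).not_iso (hCnt n), hCorth⟩
    have hCdim : ∀ n, finrank k (C n).carrier = (e : ℕ) := fun n => by
      have hmem : dimf (ι n) = e := (emb2 n).2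
      exact congrArg Fin.val hmem
    exact Nat.find_min hex e.2 ⟨C, hC, hCdim⟩
  rw [not_infinite_iff_finite] at hfin
  have hsetfin : {n : ℕ | ¬ (B n).IsBrick}.Finite := Set.finite_coe_iff.mp hfin
  have hcompl : {n : ℕ | (B n).IsBrick}.Infinite := by
    have h := hsetfin.infinite_compl
    have heq : {n : ℕ | ¬ (B n).IsBrick}ᶜ = {n : ℕ | (B n).IsBrick} := by
      ext n; simp
    rwa [heq] at h
  haveI := hcompl.to_subtype
  let emb3 := Infinite.natEmbedding {n : ℕ | (B n).IsBrick}
  refine ⟨d, hd_pos, hd_le, ULift ℕ, fun j => B (emb3 j.down).1, inferInstance, ?_, ?_, ?_⟩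
  · exact homOrthFamily_comp hB
      (Subtype.val_injective.comp (emb3.injective.comp (fun a b => congrArg ULift.up)))
  · exact fun j => (emb3 j.down).2
  · exact fun j => hBdim _
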